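/- Let k, l ∈ ℕ, let H_0 be an infinite pairwise prime subset of ℕ, and let A be an l-syndetic set. If B is a pairwise prime subset of A with |B| ≥ l (and B finite), then there exist x, r ∈ ℕ and n ∈ H_0 with r ≡ 1 (mod n), x ∈ A and x·n^k·r ∈ A. -/

import Mathlib

/-- `A` is `l`-syndetic: it meets every block of `l` consecutive positive integers. -/
def SyndeticWith (A : Set ℕ) (l : ℕ) : Prop :=
  ∀ n : ℕ, 0 < n → ∃ m ∈ A, n ≤ m ∧ m < n + l

/-- `A` is syndetic if it is `l`-syndetic for some positive integer `l`. -/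
def Syndetic (A : Set ℕ) : Prop :=
  ∃ l : ℕ, 0 < l ∧ SyndeticWith A l

/-- A pairwise prime subset of the positive integers. -/
def PairwisePrimeSet (B : Set ℕ) : Prop :=
  (∀ x ∈ B, 0 < x) ∧ ∀ a ∈ B, ∀ b ∈ B, a ≠ b → Nat.Coprime a b

lemma crt_finset {ι : Type*} [DecidableEq ι] (s : Finset ι) (M a : ι → ℕ)
    (hcop : ∀ i ∈ s, ∀ j ∈ s, i ≠ j → Nat.Coprime (M i) (M j)) :
    ∃ m : ℕ, ∀ i ∈ s, m ≡ a i [MOD M i] := by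
  induction s using Finset.induction with
  | empty => exact ⟨0, fun i hi => absurd hi (Finset.notMem_empty i)⟩
  | @insert i s his ih =>
    obtain ⟨m0, hm0⟩ := ih (fun x hx y hy hxy =>
      hcop x (Finset.mem_insert_of_mem hx) y (Finset.mem_insert_of_mem hy) hxy)
    have hc : Nat.Coprime (M i) (∏ j ∈ s, M j) :=
      Nat.Coprime.prod_right fun j hj =>
        hcop i (Finset.mem_insert_self i s) j (Finset.mem_insert_of_mem hj)
          (fun h => his (h ▸ hj))
    obtain ⟨m, hm1, hm2⟩ := Nat.chineseRemainder hc (a i) m0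
    refine ⟨m, fun j hj => ?_⟩
    rcases Finset.mem_insert.mp hj with rfl | hj
    · exact hm1
    · exact (Nat.ModEq.of_dvd (Finset.dvd_prod_of_mem M hj) hm2).trans (hm0 j hj)

/-- an `l`-syndetic set containing a pairwise prime subset of
cardinality at least `l` contains a configuration `{x, x·n^k·r}` with `n ∈ H₀`
and `r ≡ 1 (mod n)`. -/
theorem syndetic_with_large_pairwise_prime_subset (k l : ℕ) (hk : 0 < k)
    (hl : 0 < l) (H0 : Set ℕ) (hH0inf : H0.Infinite) (hH0 : PairwisePrimeSet H0)
    (A : Set ℕ) (hA : SyndeticWith A l) (B : Finset ℕ)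
    (hBA : ↑B ⊆ A) (hBcard : l ≤ B.card) (hBpos : ∀ b ∈ B, 0 < b)
    (hBcop : ∀ a ∈ B, ∀ b ∈ B, a ≠ b → Nat.Coprime a b) :
    ∃ x r n : ℕ, n ∈ H0 ∧ 0 < r ∧ r ≡ 1 [MOD n] ∧ x ∈ A ∧ x * n ^ k * r ∈ A := by
  classical
  -- choose l pairwise coprime elements of B
  obtain ⟨t, htB, htcard⟩ := Finset.exists_subset_card_eq hBcard
  set b : Fin l → ℕ := fun i => ((t.orderIsoOfFin htcard i : ℕ)) with hbdef
  have hbmem : ∀ i, b i ∈ B := fun i => htB (t.orderIsoOfFin htcard i).2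
  have hbpos : ∀ i, 0 < b i := fun i => hBpos _ (hbmem i)
  have hbinj : Function.Injective b := fun i j h => by
    have := Subtype.val_injective h
    exact (t.orderIsoOfFin htcard).injective this
  have hbcop : ∀ i j, i ≠ j → Nat.Coprime (b i) (b j) := fun i j hij =>
    hBcop _ (hbmem i) _ (hbmem j) (fun h => hij (hbinj h))
  -- P = product of the b's
  set P : ℕ := ∏ i, b i with hPdef
  have hPpos : 0 < P := Finset.prod_pos fun i _ => hbpos i
  have hbdvdP : ∀ i, b i ∣ P := fun i => Finset.dvd_prod_of_mem b (Finset.mem_univ i)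
  -- elements of H0 not coprime to P form a finite set
  have hfin : {h ∈ H0 | ¬ Nat.Coprime h P}.Finite := by
    have hmaps : ∀ h ∈ {h ∈ H0 | ¬ Nat.Coprime h P},
        (Nat.gcd h P).minFac ∈ P.primeFactors := by
      intro h hh
      have hg2 : 2 ≤ Nat.gcd h P := by
        rcases Nat.lt_or_ge (Nat.gcd h P) 2 with h2 | h2
        · interval_cases hg : (Nat.gcd h P)
          · exact absurd (Nat.eq_zero_of_gcd_eq_zero_right hg) hPpos.ne'
          · exact absurd hg hh.2
        · exact h2
      have hp : (Nat.gcd h P).minFac.Prime := Nat.minFac_prime (by omega)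
      exact Nat.mem_primeFactors.mpr
        ⟨hp, (Nat.minFac_dvd _).trans (Nat.gcd_dvd_right h P), hPpos.ne'⟩
    have hinj : Set.InjOn (fun h => (Nat.gcd h P).minFac)
        {h ∈ H0 | ¬ Nat.Coprime h P} := by
      intro x hx y hy hxy
      by_contra hne
      have hpx : (Nat.gcd x P).minFac.Prime := ((Nat.mem_primeFactors.mp (hmaps x hx)).1)
      have hdx : (Nat.gcd x P).minFac ∣ x := (Nat.minFac_dvd _).trans (Nat.gcd_dvd_left x P)
      have hdy : (Nat.gcd y P).minFac ∣ y := (Nat.minFac_dvd _).trans (Nat.gcd_dvd_left y P)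
      have hcopxy := hH0.2 x hx.1 y hy.1 hne
      have hxy' : (Nat.gcd x P).minFac = (Nat.gcd y P).minFac := hxy
      have : (Nat.gcd x P).minFac ∣ Nat.gcd x y := Nat.dvd_gcd hdx (hxy' ▸ hdy)
      rw [hcopxy] at this
      exact hpx.ne_one (Nat.dvd_one.mp this)
    exact Set.Finite.of_finite_image
      ((P.primeFactors.finite_toSet).subset (by
        rintro _ ⟨h, hh, rfl⟩; exact hmaps h hh)) hinj
  -- choose l distinct elements of H0 coprime to P
  have hinf2 : (H0 \ {h ∈ H0 | ¬ Nat.Coprime h P}).Infinite := hH0inf.diff hfin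
  obtain ⟨u, huH, hucard⟩ := hinf2.exists_subset_card_eq l
  set nf : Fin l → ℕ := fun i => ((u.orderIsoOfFin hucard i : ℕ)) with hnfdef
  have hnfmem : ∀ i, nf i ∈ H0 ∧ Nat.Coprime (nf i) P := by
    intro i
    have := huH (u.orderIsoOfFin hucard i).2
    rcases this with ⟨h1, h2⟩
    exact ⟨h1, by by_contra hc; exact h2 ⟨h1, hc⟩⟩
  have hnfpos : ∀ i, 0 < nf i := fun i => hH0.1 _ (hnfmem i).1
  have hnfinj : Function.Injective nf := fun i j h =>
    (u.orderIsoOfFin hucard).injective (Subtype.val_injective h)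
  have hnfcop : ∀ i j, i ≠ j → Nat.Coprime (nf i) (nf j) := fun i j hij =>
    hH0.2 _ (hnfmem i).1 _ (hnfmem j).1 (fun h => hij (hnfinj h))
  have hnb : ∀ i j, Nat.Coprime (nf i) (b j) := fun i j =>
    Nat.Coprime.coprime_dvd_right (hbdvdP j) (hnfmem i).2
  -- moduli
  set M : Fin l → ℕ := fun i => b i * nf i ^ (k + 1) with hMdef
  have hMpos : ∀ i, 0 < M i := fun i =>
    Nat.mul_pos (hbpos i) (Nat.pow_pos (hnfpos i))
  have hMcop : ∀ i ∈ (Finset.univ : Finset (Fin l)), ∀ j ∈ Finset.univ,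
      i ≠ j → Nat.Coprime (M i) (M j) := by
    intro i _ j _ hij
    refine Nat.Coprime.mul ?_ ?_
    · exact (hbcop i j hij).mul_right (((hnb j i).symm).pow_right _)
    · exact Nat.Coprime.pow_left _
        (((hnb i j)).mul_right ((hnfcop i j hij).pow_right _))
  -- CRT
  obtain ⟨m, hm⟩ := crt_finset Finset.univ M
    (fun i => b i * nf i ^ k + M i * l - ((i : ℕ) + 1)) hMcop
  -- lift to a large solution
  set Pm : ℕ := ∏ i, M i with hPmdef
  have hPmpos : 0 < Pm := Finset.prod_pos fun i _ => hMpos i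
  have hMdvdPm : ∀ i, M i ∣ Pm := fun i => Finset.dvd_prod_of_mem M (Finset.mem_univ i)
  set m' : ℕ := m + (m + 1) * Pm with hm'def
  have hm'large : ∀ i, b i * nf i ^ k ≤ m' := by
    intro i
    have h1 : b i * nf i ^ k ≤ M i := by
      have : nf i ^ k ≤ nf i ^ (k + 1) :=
        Nat.pow_le_pow_right (hnfpos i) (Nat.le_succ k)
      exact Nat.mul_le_mul_left _ this
    have h2 : M i ≤ Pm := Nat.le_of_dvd hPmpos (hMdvdPm i)
    have h3 : Pm ≤ (m + 1) * Pm := Nat.le_mul_of_pos_left _ (Nat.succ_pos m)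
    omega
  have hm'mod : ∀ i : Fin l, m' + ((i : ℕ) + 1) ≡ b i * nf i ^ k [MOD M i] := by
    intro i
    have h0 : m' ≡ m [MOD M i] := by
      have : M i ∣ (m + 1) * Pm := (hMdvdPm i).mul_left _
      exact ((Nat.modEq_iff_dvd' (Nat.le_add_right _ _)).mpr (by simpa using this)).symm
    have h1 : m' ≡ b i * nf i ^ k + M i * l - ((i : ℕ) + 1) [MOD M i] :=
      h0.trans (hm i (Finset.mem_univ i))
    have h2 : m' + ((i : ℕ) + 1) ≡ b i * nf i ^ k + M i * l [MOD M i] := by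
      have hle : (i : ℕ) + 1 ≤ M i * l := by
        have := i.2
        have := hMpos i
        nlinarith
      have hle2 : (i : ℕ) + 1 ≤ b i * nf i ^ k + M i * l := le_trans hle (Nat.le_add_left _ _)
      have := h1.add_right ((i : ℕ) + 1)
      rwa [Nat.sub_add_cancel hle2] at this
    have hd3 : M i ∣ b i * nf i ^ k + M i * l - b i * nf i ^ k := by simp
    have h3 : b i * nf i ^ k + M i * l ≡ b i * nf i ^ k [MOD M i] :=
      ((Nat.modEq_iff_dvd' (Nat.le_add_right _ _)).mpr hd3).symm
    exact h2.trans h3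
  -- apply syndeticity
  obtain ⟨a, haA, ha1, ha2⟩ := hA (m' + 1) (Nat.succ_pos m')
  have hi0 : a - (m' + 1) < l := by omega
  set i : Fin l := ⟨a - (m' + 1), hi0⟩ with hidef
  have haeq : a = m' + ((i : ℕ) + 1) := by simp [hidef]; omega
  have hle : b i * nf i ^ k ≤ m' + ((i : ℕ) + 1) := le_trans (hm'large i) (by omega)
  have hdvd : M i ∣ (m' + ((i : ℕ) + 1) - b i * nf i ^ k) :=
    (Nat.modEq_iff_dvd' hle).mp (hm'mod i).symm
  obtain ⟨c, hc⟩ := hdvd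
  have hval : m' + ((i : ℕ) + 1) = b i * nf i ^ k * (1 + nf i * c) := by
    have h4 : m' + ((i : ℕ) + 1) = b i * nf i ^ k + M i * c := by omega
    have h5 : M i = b i * nf i ^ k * nf i := by
      simp only [hMdef]; rw [pow_succ]; ring
    rw [h4, h5]; ring
  refine ⟨b i, 1 + nf i * c, nf i, (hnfmem i).1, by omega, ?_, hBA (hbmem i), ?_⟩
  · show (1 + nf i * c) % nf i = 1 % nf i
    simp [Nat.add_mul_mod_self_left]
  · rw [← hval, ← haeq]; exact haA
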